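/- Proposition 1 (greedy optimality, recursive form): let D be a dictionary, s a nonempty list, a a prefix of s belonging to D of maximal length among all prefixes of s belonging to D, and write s = a ++ r. If r is nonempty, then the minimal covering size of s by D equals 1 plus the minimal covering size of r by D; if r is empty, the minimal covering size of s by D equals 1. -/

import Mathlib

/-- A dictionary over the alphabet `α`: a set of nonempty lists containing all
single-letter lists and closed under nonempty contiguous subsequences (infixes). -/
def IsDictionary {α : Type*} (D : Set (List α)) : Prop :=
  (∀ a : α, [a] ∈ D) ∧ (∀ t ∈ D, t ≠ []) ∧
  (∀ t ∈ D, ∀ u : List α, u ≠ [] → u <:+: t → u ∈ D)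

/-- `L` is a covering of `s` by `D`: every block of `L` belongs to `D`
and the concatenation of the blocks equals `s`. -/
def IsCovering {α : Type*} (D : Set (List α)) (L : List (List α)) (s : List α) : Prop :=
  (∀ b ∈ L, b ∈ D) ∧ L.flatten = s

/-- The minimal number of blocks of a covering of `s` by `D`. -/
noncomputable def minCover {α : Type*} (D : Set (List α)) (s : List α) : ℕ :=
  sInf {n | ∃ L, IsCovering D L s ∧ L.length = n}

/-- The covering similarity `𝒮(s,S) = (|s| - k + 1)/|s|` where `k` is the minimal
covering size of `s` by the dictionary `D`. -/
noncomputable def covSim {α : Type*} (D : Set (List α)) (s : List α) : ℝ :=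
  ((s.length : ℝ) - (minCover D s : ℝ) + 1) / (s.length : ℝ)

lemma exists_singleton_cover {α : Type*} (D : Set (List α)) (hD : IsDictionary D)
    (s : List α) : ∃ L, IsCovering D L s ∧ L.length = s.length := by
  induction s with
  | nil => exact ⟨[], ⟨by simp, rfl⟩, rfl⟩
  | cons x t ih =>
    obtain ⟨L, ⟨hL, hflat⟩, hlen⟩ := ih
    refine ⟨[x] :: L, ⟨?_, ?_⟩, ?_⟩
    · intro b hb
      rcases List.mem_cons.1 hb with h | h
      · exact h ▸ hD.1 x
      · exact hL b h
    · simp [hflat]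
    · simp [hlen]

lemma cover_set_nonempty {α : Type*} (D : Set (List α)) (hD : IsDictionary D)
    (s : List α) : {n | ∃ L, IsCovering D L s ∧ L.length = n}.Nonempty := by
  obtain ⟨L, hL, hlen⟩ := exists_singleton_cover D hD s
  exact ⟨L.length, L, hL, rfl⟩

/-- Any suffix of the flatten of a covering admits a covering of no greater length. -/
lemma suffix_cover {α : Type*} (D : Set (List α)) (hD : IsDictionary D) :
    ∀ L : List (List α), (∀ b ∈ L, b ∈ D) → ∀ t : List α, t <:+ L.flatten →
    ∃ M : List (List α), (∀ b ∈ M, b ∈ D) ∧ M.flatten = t ∧ M.length ≤ L.length := by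
  intro L
  induction L with
  | nil =>
    intro _ t ht
    simp only [List.flatten_nil, List.suffix_nil] at ht
    exact ⟨[], by intro b hb; simp at hb, by simp [ht], le_refl _⟩
  | cons b L' ih =>
    intro hL t ht
    obtain ⟨u, hu⟩ := ht
    simp only [List.flatten_cons] at hu
    have hbL : ∀ c ∈ L', c ∈ D := fun c hc => hL c (List.mem_cons_of_mem _ hc)
    have hub : u <+: b ∨ b <+: u := by
      apply List.prefix_or_prefix_of_prefix (l₃ := b ++ L'.flatten)
      · exact hu ▸ List.prefix_append u t
      · exact List.prefix_append b L'.flatten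
    rcases hub with h | h
    · -- u is a prefix of b : t = b' ++ L'.flatten
      obtain ⟨b', hb'⟩ := h
      have ht' : t = b' ++ L'.flatten := by
        have : u ++ t = u ++ (b' ++ L'.flatten) := by
          rw [← List.append_assoc, hb', hu]
        exact List.append_cancel_left this
      by_cases hb'e : b' = []
      · subst hb'e
        simp only [List.nil_append] at ht'
        exact ⟨L', hbL, ht'.symm, Nat.le_succ _⟩
      · have hb'D : b' ∈ D := by
          apply hD.2.2 b (hL b List.mem_cons_self) b' hb'e
          exact (List.suffix_iff_eq_drop.mpr (by
            rw [← hb']; simp)).isInfix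
        refine ⟨b' :: L', ?_, ?_, le_refl _⟩
        · intro c hc
          rcases List.mem_cons.1 hc with h | h
          · exact h ▸ hb'D
          · exact hbL c h
        · simp [ht']
    · -- b is a prefix of u : t is a suffix of L'.flatten
      obtain ⟨u', hu'⟩ := h
      have : t <:+ L'.flatten := by
        refine ⟨u', ?_⟩
        have : b ++ (u' ++ t) = b ++ L'.flatten := by
          rw [← List.append_assoc, hu', hu]
        exact List.append_cancel_left this
      obtain ⟨M, hM1, hM2, hM3⟩ := ih hbL t this
      exact ⟨M, hM1, hM2, hM3.trans (Nat.le_succ _)⟩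

/-- Proposition 1 (greedy optimality, recursive form): if `a` is a maximal-length
prefix of the nonempty list `s` belonging to the dictionary `D`, with `s = a ++ r`,
then `minCover D s = 1 + minCover D r` when `r` is nonempty, and `minCover D s = 1`
when `r` is empty. -/
theorem greedy_recursive_optimality {α : Type*} (D : Set (List α)) (hD : IsDictionary D)
    (s a r : List α) (hs : s ≠ []) (haD : a ∈ D) (har : a ++ r = s)
    (hmax : ∀ p ∈ D, p <+: s → p.length ≤ a.length) :
    (r ≠ [] → minCover D s = 1 + minCover D r) ∧ (r = [] → minCover D s = 1) := by
  have hne_s := cover_set_nonempty D hD s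
  -- There is an optimal covering of s
  obtain ⟨L, hLcov, hLlen⟩ := Nat.sInf_mem hne_s
  have hLlen : L.length = minCover D s := hLlen
  constructor
  · intro hr
    have hne_r := cover_set_nonempty D hD r
    obtain ⟨M, hMcov, hMlen⟩ := Nat.sInf_mem hne_r
    have hMlen : M.length = minCover D r := hMlen
    apply le_antisymm
    · -- minCover s ≤ 1 + minCover r, via covering a :: M
      apply Nat.sInf_le
      refine ⟨a :: M, ⟨?_, ?_⟩, by simp [hMlen, Nat.add_comm]⟩
      · intro b hb
        rcases List.mem_cons.1 hb with h | h
        · exact h ▸ haD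
        · exact hMcov.1 b h
      · simp [hMcov.2, har]
    · -- 1 + minCover r ≤ minCover s
      cases L with
      | nil =>
        exfalso; apply hs; rw [← hLcov.2]; rfl
      | cons b L' =>
        have hbD : b ∈ D := hLcov.1 b List.mem_cons_self
        have hflat : b ++ L'.flatten = s := by
          have := hLcov.2; simpa using this
        have hbpre : b <+: s := hflat ▸ List.prefix_append b L'.flatten
        have hblen : b.length ≤ a.length := hmax b hbD hbpre
        have hba : b <+: a := by
          apply List.prefix_of_prefix_length_le hbpre _ hblen
          exact har ▸ List.prefix_append a r
        obtain ⟨c, hc⟩ := hba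
        have hrsuf : r <:+ L'.flatten := by
          refine ⟨c, ?_⟩
          have : b ++ (c ++ r) = b ++ L'.flatten := by
            rw [← List.append_assoc, hc, har, hflat]
          exact List.append_cancel_left this
        obtain ⟨M', hM'1, hM'2, hM'3⟩ := suffix_cover D hD L'
          (fun x hx => hLcov.1 x (List.mem_cons_of_mem _ hx)) r hrsuf
        have h1 : minCover D r ≤ L'.length :=
          le_trans (Nat.sInf_le ⟨M', ⟨hM'1, hM'2⟩, rfl⟩) hM'3
        calc 1 + minCover D r ≤ 1 + L'.length := by omega
          _ = (b :: L').length := by simp [Nat.add_comm]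
          _ = minCover D s := hLlen
  · intro hr
    subst hr
    simp only [List.append_nil] at har
    apply le_antisymm
    · apply Nat.sInf_le
      exact ⟨[a], ⟨by simpa using haD, by simpa using har⟩, rfl⟩
    · rw [Nat.one_le_iff_ne_zero]
      intro h0
      rw [h0] at hLlen
      have : L = [] := List.length_eq_zero_iff.mp hLlen
      apply hs
      rw [← hLcov.2, this]; rfl
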